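/- Let G be a locally compact topological group in which every element is contained in a compact open subgroup, and suppose every ascending chain of compact open subgroups of G stabilises. If G is the union of an ascending chain of compact subgroups, then G is compact. -/

import Mathlib

/-- Let `G` be a locally compact group in which every element lies in a compact
open subgroup and every ascending chain of compact open subgroups stabilises.
If `G` is a union of an ascending chain of compact subgroups, then `G` is compact. -/
theorem compact_of_union_ascending_chain_of_compact_subgroups
    {G : Type*} [Group G] [TopologicalSpace G] [IsTopologicalGroup G] [T2Space G]
    [LocallyCompactSpace G]
    (h1 : ∀ g : G, ∃ U : Subgroup G, IsCompact (U : Set G) ∧ IsOpen (U : Set G) ∧ g ∈ U)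
    (h2 : ∀ U : ℕ → Subgroup G,
      (∀ n, IsCompact (U n : Set G) ∧ IsOpen (U n : Set G)) → Monotone U →
      ∃ N, ∀ n, N ≤ n → U n = U N)
    (h3 : ∃ K : ℕ → Subgroup G, Monotone K ∧ (∀ n, IsCompact (K n : Set G)) ∧
      (⋃ n, (K n : Set G)) = Set.univ) :
    CompactSpace G := by
  obtain ⟨K, hmono, hKc, hKu⟩ := h3
  -- By Baire category, some `K m` has nonempty interior, hence is open.
  have : Nonempty G := ⟨1⟩
  obtain ⟨m, hm⟩ : ∃ m, (interior (K m : Set G)).Nonempty := by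
    apply nonempty_interior_of_iUnion_of_closed (fun n => (hKc n).isClosed) hKu
  have hopen : IsOpen (K m : Set G) := by
    obtain ⟨x, hx⟩ := hm
    exact Subgroup.isOpen_of_mem_nhds _ (mem_interior_iff_mem_nhds.mp hx)
  -- The shifted chain consists of compact open subgroups, hence stabilises.
  obtain ⟨N, hN⟩ := h2 (fun n => K (m + n))
    (fun n => ⟨hKc _, Subgroup.isOpen_mono (hmono (Nat.le_add_right m n)) hopen⟩)
    (fun a b hab => hmono (by omega))
  -- Hence `G = K (m + N)` is compact.
  have huniv : (K (m + N) : Set G) = Set.univ := by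
    apply Set.eq_univ_of_univ_subset
    rw [← hKu]
    refine Set.iUnion_subset fun n x hx => ?_
    have h1 : K n ≤ K (m + max n N) := hmono (by omega)
    have h2 : K (m + max n N) = K (m + N) := hN _ (le_max_right n N)
    rw [← h2]
    exact h1 hx
  rw [← isCompact_univ_iff, ← huniv]
  exact hKc _
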